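/- Let H₊ and H₋ be Hermitian n×n complex matrices such that H₊ is positive definite and the kernel of H₋ equals the span of a single nonzero vector φ ∈ ℂⁿ. Let H : ℂⁿ × ℂⁿ → ℂⁿ × ℂⁿ be the linear map H(f, g) = (H₋g, H₊f). Then: (i) ker(H) = {0} × span{φ}; (ii) ker(H²) = ker(H) ⊕ span{(H₊⁻¹φ, 0)}; (iii) ker(H³) = ker(H²). In particular, the generalized nullspace of H equals ker(H²) and has dimension 2. -/

import Mathlib

/- STATEMENT 12 (generalized nullspace, one-dimensional case): H(f,g) = (H₋g, H₊f)
with H₊ Hermitian positive definite and ker H₋ = span{φ}, φ ≠ 0. Then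
ker H = {0} × span{φ}, ker H² = ker H ⊕ span{(H₊⁻¹φ, 0)}, ker H³ = ker H²,
and the generalized nullspace ker H² has dimension 2. -/

open Matrix
open scoped ComplexOrder

theorem generalized_nullspace_with_josephson
    (n : ℕ) (Hp Hm : Matrix (Fin n) (Fin n) ℂ)
    (hHm : Hm.IsHermitian) (hHpHerm : Hp.IsHermitian) (hHp : Hp.PosDef)
    (φ : Fin n → ℂ) (hφ : φ ≠ 0)
    (hker : LinearMap.ker Hm.mulVecLin = Submodule.span ℂ {φ})
    (H : Module.End ℂ ((Fin n → ℂ) × (Fin n → ℂ)))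
    (hH : ∀ fg : (Fin n → ℂ) × (Fin n → ℂ), H fg = (Hm.mulVec fg.2, Hp.mulVec fg.1)) :
    LinearMap.ker H = Submodule.prod ⊥ (Submodule.span ℂ {φ})
    ∧ LinearMap.ker (H ^ 2)
        = LinearMap.ker H ⊔ Submodule.span ℂ {((Hp⁻¹.mulVec φ, 0) : (Fin n → ℂ) × (Fin n → ℂ))}
    ∧ Disjoint (LinearMap.ker H)
        (Submodule.span ℂ {((Hp⁻¹.mulVec φ, 0) : (Fin n → ℂ) × (Fin n → ℂ))})
    ∧ LinearMap.ker (H ^ 3) = LinearMap.ker (H ^ 2)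
    ∧ Module.finrank ℂ (LinearMap.ker (H ^ 2)) = 2 := by
  have hdet : IsUnit Hp.det := isUnit_iff_ne_zero.mpr hHp.det_pos.ne'
  have hinv1 : ∀ v, Hp.mulVec (Hp⁻¹.mulVec v) = v := fun v => by
    rw [Matrix.mulVec_mulVec, Matrix.mul_nonsing_inv _ hdet, Matrix.one_mulVec]
  have hinv2 : ∀ v, Hp⁻¹.mulVec (Hp.mulVec v) = v := fun v => by
    rw [Matrix.mulVec_mulVec, Matrix.nonsing_inv_mul _ hdet, Matrix.one_mulVec]
  have hHpinj : ∀ v, Hp.mulVec v = 0 → v = 0 := fun v hv => by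
    have := hinv2 v; rw [hv, Matrix.mulVec_zero] at this; exact this.symm
  have hmem : ∀ g, Hm.mulVec g = 0 ↔ g ∈ Submodule.span ℂ {φ} := fun g => by
    rw [← hker]; simp [LinearMap.mem_ker]
  have hφker : Hm.mulVec φ = 0 := (hmem φ).mpr (Submodule.mem_span_singleton_self φ)
  -- key: H₋ H₊ H₋ g = 0 → H₋ g = 0
  have hkey : ∀ g, Hm.mulVec (Hp.mulVec (Hm.mulVec g)) = 0 → Hm.mulVec g = 0 := by
    intro g hg
    set w := Hm.mulVec g with hwdef
    obtain ⟨c, hc⟩ := Submodule.mem_span_singleton.mp ((hmem _).mp hg)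
    have h0 : star w ⬝ᵥ φ = 0 := by
      calc star w ⬝ᵥ φ = (star g ᵥ* Hmᴴ) ⬝ᵥ φ := by rw [hwdef, Matrix.star_mulVec]
        _ = star g ⬝ᵥ (Hmᴴ *ᵥ φ) := (Matrix.dotProduct_mulVec _ _ _).symm
        _ = 0 := by rw [hHm.eq, hφker, dotProduct_zero]
    have hz : star w ⬝ᵥ Hp *ᵥ w = 0 := by
      rw [← hc, dotProduct_smul, h0, smul_zero]
    by_contra hw
    exact (hHp.dotProduct_mulVec_pos hw).ne' hz
  have hH2 : ∀ fg : (Fin n → ℂ) × (Fin n → ℂ),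
      (H ^ 2) fg = (Hm.mulVec (Hp.mulVec fg.1), Hp.mulVec (Hm.mulVec fg.2)) := by
    intro fg; rw [pow_two, Module.End.mul_apply, hH, hH]
  have hH3 : ∀ fg : (Fin n → ℂ) × (Fin n → ℂ),
      (H ^ 3) fg = (Hm.mulVec (Hp.mulVec (Hm.mulVec fg.2)),
        Hp.mulVec (Hm.mulVec (Hp.mulVec fg.1))) := by
    intro fg
    rw [pow_succ, Module.End.mul_apply, hH, hH2]
  have h1 : LinearMap.ker H = Submodule.prod ⊥ (Submodule.span ℂ {φ}) := by
    ext ⟨f, g⟩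
    simp only [LinearMap.mem_ker, hH, Submodule.mem_prod, Submodule.mem_bot, Prod.mk_eq_zero]
    constructor
    · rintro ⟨ha, hb⟩; exact ⟨hHpinj f hb, (hmem g).mp ha⟩
    · rintro ⟨hf, hg⟩; subst hf; exact ⟨(hmem g).mpr hg, by simp⟩
  have hvne : Hp⁻¹.mulVec φ ≠ 0 := fun h => by
    have := hinv1 φ; rw [h, Matrix.mulVec_zero] at this; exact hφ this.symm
  have hkerle : LinearMap.ker H ≤ LinearMap.ker (H ^ 2) := by
    intro x hx
    simp only [LinearMap.mem_ker] at hx ⊢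
    rw [pow_two, Module.End.mul_apply, hx, map_zero]
  have hspanker : ((Hp⁻¹.mulVec φ, 0) : (Fin n → ℂ) × (Fin n → ℂ)) ∈ LinearMap.ker (H ^ 2) := by
    simp only [LinearMap.mem_ker, hH2, hinv1, hφker, Matrix.mulVec_zero, Prod.mk_eq_zero]
    exact ⟨trivial, trivial⟩
  have h2 : LinearMap.ker (H ^ 2)
      = LinearMap.ker H ⊔ Submodule.span ℂ {((Hp⁻¹.mulVec φ, 0) : (Fin n → ℂ) × (Fin n → ℂ))} := by
    apply le_antisymm
    · rintro ⟨f, g⟩ hx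
      simp only [LinearMap.mem_ker, hH2, Prod.mk_eq_zero] at hx
      obtain ⟨ha, hb⟩ := hx
      have hg0 : Hm.mulVec g = 0 := hHpinj _ hb
      obtain ⟨c, hc⟩ := Submodule.mem_span_singleton.mp ((hmem _).mp ha)
      have hf : f = c • Hp⁻¹.mulVec φ := by
        have := hinv2 f
        rw [← hc, Matrix.mulVec_smul] at this
        exact this.symm
      refine Submodule.mem_sup.mpr ⟨(0, g), ?_, c • (Hp⁻¹.mulVec φ, 0), ?_, ?_⟩
      · rw [h1]; exact ⟨Submodule.mem_bot ℂ |>.mpr rfl, (hmem g).mp hg0⟩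
      · exact Submodule.smul_mem _ c (Submodule.mem_span_singleton_self _)
      · rw [Prod.smul_mk]; ext <;> simp [hf]
    · exact sup_le hkerle ((Submodule.span_singleton_le_iff_mem _ _).mpr hspanker)
  have h3 : Disjoint (LinearMap.ker H)
      (Submodule.span ℂ {((Hp⁻¹.mulVec φ, 0) : (Fin n → ℂ) × (Fin n → ℂ))}) := by
    rw [Submodule.disjoint_def]
    intro x hx hx'
    obtain ⟨c, hc⟩ := Submodule.mem_span_singleton.mp hx'
    rw [h1] at hx
    have h1' : x.1 = 0 := Submodule.mem_bot ℂ |>.mp hx.1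
    have h2' : x.2 = 0 := by rw [← hc]; simp
    exact Prod.ext h1' h2'
  have h4 : LinearMap.ker (H ^ 3) = LinearMap.ker (H ^ 2) := by
    apply le_antisymm
    · rintro ⟨f, g⟩ hx
      simp only [LinearMap.mem_ker, hH3, Prod.mk_eq_zero] at hx
      obtain ⟨ha, hb⟩ := hx
      have hg : Hm.mulVec g = 0 := hkey g ha
      have hf : Hm.mulVec (Hp.mulVec f) = 0 := hHpinj _ hb
      simp only [LinearMap.mem_ker, hH2, Prod.mk_eq_zero, hf, hg, Matrix.mulVec_zero]
      exact ⟨trivial, trivial⟩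
    · intro x hx
      simp only [LinearMap.mem_ker] at hx ⊢
      rw [pow_succ', Module.End.mul_apply, hx, map_zero]
  have hkerH1 : Module.finrank ℂ (LinearMap.ker H) = 1 := by
    have : LinearMap.ker H = Submodule.span ℂ {((0, φ) : (Fin n → ℂ) × (Fin n → ℂ))} := by
      rw [h1]; ext ⟨f, g⟩
      simp only [Submodule.mem_prod, Submodule.mem_bot, Submodule.mem_span_singleton,
        Prod.ext_iff, Prod.smul_mk, smul_zero]
      constructor
      · rintro ⟨hf, c, hc⟩; exact ⟨c, hf.symm, hc⟩
      · rintro ⟨c, hc1, hc2⟩; exact ⟨hc1.symm, c, hc2⟩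
    rw [this]
    exact finrank_span_singleton (by simp [Prod.ext_iff, hφ])
  have h5 : Module.finrank ℂ (LinearMap.ker (H ^ 2)) = 2 := by
    have hfs := Submodule.finrank_sup_add_finrank_inf_eq (LinearMap.ker H)
      (Submodule.span ℂ {((Hp⁻¹.mulVec φ, 0) : (Fin n → ℂ) × (Fin n → ℂ))})
    rw [← h2, h3.eq_bot, finrank_bot, hkerH1,
      finrank_span_singleton (by simp [Prod.ext_iff, hvne])] at hfs
    omega
  exact ⟨h1, h2, h3, h4, h5⟩
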